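/- Let c2, c3, c4, c5 be real constants with c5 ≠ 0, let w : ℝ → ℝ be three times differentiable with w > 0 everywhere, and let h : ℝ → ℝ satisfy h'(z) = √(w(h(z))) for all z. If h satisfies c5·h'''' + c4·h''' + c3·h'' + h² − c2·h = 0 on ℝ, then for all z: 2·c5·w(h(z))·w'''(h(z)) + (c5·w'(h(z)) + 2·c4·√(w(h(z))))·w''(h(z)) + 2·c3·w'(h(z)) + 4·h(z)² − 4·c2·h(z) = 0. -/

import Mathlib

theorem stmt_15 (c2 c3 c4 c5 : ℝ) (hc5 : c5 ≠ 0)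
    (w : ℝ → ℝ) (hw : ContDiff ℝ 3 w) (hwpos : ∀ s : ℝ, 0 < w s)
    (h : ℝ → ℝ) (hh : ∀ z : ℝ, deriv h z = Real.sqrt (w (h z)))
    (hode : ∀ z : ℝ, c5 * iteratedDeriv 4 h z + c4 * iteratedDeriv 3 h z
      + c3 * iteratedDeriv 2 h z + (h z) ^ 2 - c2 * h z = 0) :
    ∀ z : ℝ,
      2 * c5 * w (h z) * iteratedDeriv 3 w (h z)
        + (c5 * deriv w (h z) + 2 * c4 * Real.sqrt (w (h z))) * iteratedDeriv 2 w (h z)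
        + 2 * c3 * deriv w (h z)
        + 4 * (h z) ^ 2 - 4 * c2 * h z = 0 := by
  intro z
  set W1 := deriv w with hW1def
  set W2 := deriv W1 with hW2def
  set W3 := deriv W2 with hW3def
  have hwd : Differentiable ℝ w := hw.differentiable (by norm_num)
  have hw2 : ContDiff ℝ 2 W1 := by
    rw [hW1def]
    have := (contDiff_succ_iff_deriv (n := 2)).mp (by exact_mod_cast hw)
    exact this.2.2
  have hW1d : Differentiable ℝ W1 := hw2.differentiable (by norm_num)
  have hw1 : ContDiff ℝ 1 W2 := by
    rw [hW2def]
    have := (contDiff_succ_iff_deriv (n := 1)).mp (by exact_mod_cast hw2)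
    exact this.2.2
  have hW2d : Differentiable ℝ W2 := hw1.differentiable (by norm_num)
  have hsqpos : ∀ s : ℝ, 0 < Real.sqrt (w s) := fun s => Real.sqrt_pos.mpr (hwpos s)
  have hdh : ∀ t, DifferentiableAt ℝ h t := by
    intro t
    by_contra hcon
    have h0 : deriv h t = 0 := deriv_zero_of_not_differentiableAt hcon
    rw [hh t] at h0
    exact absurd h0 (ne_of_gt (hsqpos (h t)))
  have hhz : ∀ t, HasDerivAt h (Real.sqrt (w (h t))) t := by
    intro t
    have := (hdh t).hasDerivAt
    rwa [hh t] at this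
  -- derivative of w ∘ h
  have hwh : ∀ t, HasDerivAt (fun u => w (h u)) (W1 (h t) * Real.sqrt (w (h t))) t := by
    intro t
    exact ((hwd (h t)).hasDerivAt.comp t (hhz t))
  -- derivative of sqrt (w ∘ h)
  have hsq : ∀ t, HasDerivAt (fun u => Real.sqrt (w (h u))) (W1 (h t) / 2) t := by
    intro t
    have hs := (Real.hasDerivAt_sqrt (ne_of_gt (hwpos (h t)))).comp t (hwh t)
    have hne : Real.sqrt (w (h t)) ≠ 0 := ne_of_gt (hsqpos (h t))
    have : 1 / (2 * Real.sqrt (w (h t))) * (W1 (h t) * Real.sqrt (w (h t)))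
        = W1 (h t) / 2 := by field_simp
    rwa [this] at hs
  have hderiv1 : deriv h = fun u => Real.sqrt (w (h u)) := funext hh
  -- second derivative of h
  have h2 : iteratedDeriv 2 h = fun u => W1 (h u) / 2 := by
    funext t
    rw [iteratedDeriv_succ, iteratedDeriv_one, hderiv1]
    exact (hsq t).deriv
  -- third derivative of h
  have h3 : iteratedDeriv 3 h = fun u => W2 (h u) * Real.sqrt (w (h u)) / 2 := by
    funext t
    rw [iteratedDeriv_succ, h2]
    have : HasDerivAt (fun u => W1 (h u) / 2) (W2 (h t) * Real.sqrt (w (h t)) / 2) t :=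
      ((hW1d (h t)).hasDerivAt.comp t (hhz t)).div_const 2
    exact this.deriv
  -- fourth derivative of h
  have h4 : iteratedDeriv 4 h z
      = (W3 (h z) * w (h z) + W2 (h z) * (W1 (h z) / 2)) / 2 := by
    rw [iteratedDeriv_succ, h3]
    have hA : HasDerivAt (fun u => W2 (h u)) (W3 (h z) * Real.sqrt (w (h z))) z :=
      (hW2d (h z)).hasDerivAt.comp z (hhz z)
    have hB : HasDerivAt (fun u => W2 (h u) * Real.sqrt (w (h u)) / 2)
        ((W3 (h z) * Real.sqrt (w (h z)) * Real.sqrt (w (h z)) + W2 (h z) * (W1 (h z) / 2)) / 2) z :=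
      (hA.mul (hsq z)).div_const 2
    have := hB.deriv
    rw [this]
    have hmul : Real.sqrt (w (h z)) * Real.sqrt (w (h z)) = w (h z) :=
      Real.mul_self_sqrt (le_of_lt (hwpos (h z)))
    linear_combination (W3 (h z) / 2) * hmul
  -- iterated derivatives of w
  have hw2eq : iteratedDeriv 2 w = W2 := by
    rw [iteratedDeriv_succ, iteratedDeriv_one]
  have hw3eq : iteratedDeriv 3 w = W3 := by
    rw [iteratedDeriv_succ, hw2eq]
  have hode' := hode z
  rw [h4, h3, h2] at hode'
  rw [hw2eq, hw3eq]
  have hmul : Real.sqrt (w (h z)) * Real.sqrt (w (h z)) = w (h z) :=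
    Real.mul_self_sqrt (le_of_lt (hwpos (h z)))
  linear_combination 4 * hode'
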